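/- Level-regular trace languages are not closed under concatenation: with Σ = {a,b,c} and D = {(a,a),(b,b),(c,c)} (all distinct letters independent), the trace languages [(ab)*] and [(bc)*] are level-regular, but their concatenation [(ab)*]·[(bc)*] is not level-regular, since the set of Foata normal forms of its elements, {{a,b,c}^k {b,c}* {b}^k : k ≥ 0} ∪ {{a,b,c}^k {a,b}* {b}^k : k ≥ 0}, is not a regular word language. -/

import Mathlib

variable {α : Type*}

/-- One commutation step: swap two adjacent independent letters. -/
inductive TraceStep (D : α → α → Prop) : List α → List α → Prop
  | swap (x y : List α) (a b : α) (h : ¬ D a b) :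
      TraceStep D (x ++ a :: b :: y) (x ++ b :: a :: y)

/-- Trace equivalence: the least congruence with `ab ≡ ba` for independent `a b`. -/
abbrev TraceEquiv (D : α → α → Prop) : List α → List α → Prop :=
  Relation.EqvGen (TraceStep D)

theorem TraceStep.append_right {D : α → α → Prop} {u u' : List α}
    (h : TraceStep D u u') (v : List α) : TraceStep D (u ++ v) (u' ++ v) := by
  cases h with
  | swap x y a b hab =>
    simpa [List.append_assoc] using TraceStep.swap (D := D) x (y ++ v) a b hab

theorem TraceStep.append_left {D : α → α → Prop} {u u' : List α}
    (h : TraceStep D u u') (v : List α) : TraceStep D (v ++ u) (v ++ u') := by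
  cases h with
  | swap x y a b hab =>
    simpa [List.append_assoc] using TraceStep.swap (D := D) (v ++ x) y a b hab

theorem TraceEquiv.append_right {D : α → α → Prop} {u u' : List α}
    (h : TraceEquiv D u u') (v : List α) : TraceEquiv D (u ++ v) (u' ++ v) := by
  induction h with
  | rel a b hab => exact .rel _ _ (hab.append_right v)
  | refl a => exact .refl _
  | symm a b _ ih => exact .symm _ _ ih
  | trans a b c _ _ ih1 ih2 => exact .trans _ _ _ ih1 ih2

theorem TraceEquiv.append_left {D : α → α → Prop} {u u' : List α}
    (h : TraceEquiv D u u') (v : List α) : TraceEquiv D (v ++ u) (v ++ u') := by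
  induction h with
  | rel a b hab => exact .rel _ _ (hab.append_left v)
  | refl a => exact .refl _
  | symm a b _ ih => exact .symm _ _ ih
  | trans a b c _ _ ih1 ih2 => exact .trans _ _ _ ih1 ih2

theorem TraceEquiv.append {D : α → α → Prop} {u u' v v' : List α}
    (h1 : TraceEquiv D u u') (h2 : TraceEquiv D v v') :
    TraceEquiv D (u ++ v) (u' ++ v') :=
  .trans _ _ _ (h1.append_right v) (h2.append_left u')

/-- The trace monoid `M(Σ,D)` as a quotient of the free monoid. -/
def Trace (D : α → α → Prop) : Type _ :=
  Quotient (Relation.EqvGen.setoid (TraceStep D))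

/-- The trace of a word. -/
def Trace.mk (D : α → α → Prop) (u : List α) : Trace D :=
  Quotient.mk (Relation.EqvGen.setoid (TraceStep D)) u

instance traceMonoid (D : α → α → Prop) : Monoid (Trace D) where
  mul := Quotient.map₂ (· ++ ·) fun _ _ h _ _ h' => TraceEquiv.append h h'
  one := Trace.mk D []
  mul_assoc a b c := Quotient.inductionOn₃ a b c fun a b c =>
    congrArg (Quotient.mk _) (List.append_assoc a b c)
  one_mul a := Quotient.inductionOn a fun a => congrArg (Quotient.mk _) (List.nil_append a)
  mul_one a := Quotient.inductionOn a fun a => congrArg (Quotient.mk _) (List.append_nil a)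

theorem Trace.mk_mul (D : α → α → Prop) (u v : List α) :
    Trace.mk D u * Trace.mk D v = Trace.mk D (u ++ v) := rfl

/-- `I_D⁻`: nonempty sets of pairwise independent letters (independence cliques). -/
def Clique (D : α → α → Prop) : Type _ :=
  {A : Finset α // A.Nonempty ∧ ∀ a ∈ A, ∀ b ∈ A, a ≠ b → ¬ D a b}

/-- `A ▷ B` : every letter of `B` depends on some letter of `A`. -/
def Rhd (D : α → α → Prop) (A B : Clique D) : Prop :=
  ∀ b ∈ B.1, ∃ a ∈ A.1, D a b

/-- The set of Foata normal forms: words `A₁ ⋯ A_p` over `I_D⁻` with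
`A_i ▷ A_{i+1}` for all `i`. -/
def Foata (D : α → α → Prop) : Language (Clique D) :=
  {w | w.Chain' (Rhd D)}

/-- The canonical morphism `Π : (I_D⁻)* → Σ*` (composed with `[·]` it gives
the canonical morphism to `M(Σ,D)`): each clique is mapped to the product of
its elements (in some order; the trace is independent of the order). -/
noncomputable def cliqueFlat {D : α → α → Prop} (w : List (Clique D)) : List α :=
  (w.map fun A => A.1.toList).flatten

/-- A trace language is level-regular if the set of Foata normal forms of its
elements is a regular word language over `I_D⁻`. -/
def LevelRegular (D : α → α → Prop) (L : Set (Trace D)) : Prop :=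
  Language.IsRegular
    {w : List (Clique D) | w ∈ Foata D ∧ Trace.mk D (cliqueFlat w) ∈ L}

/-- The alphabet `Σ = {a, b, c}`. -/
inductive ABC : Type
  | a | b | c
deriving DecidableEq

instance : Fintype ABC where
  elems := {ABC.a, ABC.b, ABC.c}
  complete := fun x => by cases x <;> simp

open scoped Pointwise


/-! ### Auxiliary lemmas -/

section Aux

theorem TraceStep.perm {D : α → α → Prop} {u v : List α} (h : TraceStep D u v) :
    u.Perm v := by
  cases h with
  | swap x y a b hab =>
    exact (List.Perm.refl x).append (List.Perm.swap b a y)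

theorem TraceEquiv.perm {D : α → α → Prop} {u v : List α} (h : TraceEquiv D u v) :
    u.Perm v := by
  induction h with
  | rel a b hab => exact hab.perm
  | refl a => exact .refl _
  | symm a b _ ih => exact ih.symm
  | trans a b c _ _ ih1 ih2 => exact ih1.trans ih2

theorem traceEquiv_of_perm {D : α → α → Prop} (hD : ∀ a b : α, a ≠ b → ¬ D a b)
    {u v : List α} (h : u.Perm v) : TraceEquiv D u v := by
  induction h with
  | nil => exact .refl _
  | cons x _ ih => exact ih.append_left [x]
  | swap x y l =>
    by_cases hxy : y = x
    · subst hxy; exact .refl _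
    · exact .rel _ _ (TraceStep.swap (D := D) [] l y x (hD _ _ hxy))
  | trans _ _ ih1 ih2 => exact .trans _ _ _ ih1 ih2

theorem trace_mk_eq_iff {D : α → α → Prop} (hD : ∀ a b : α, a ≠ b → ¬ D a b)
    {u v : List α} : Trace.mk D u = Trace.mk D v ↔ u.Perm v := by
  constructor
  · intro h
    exact TraceEquiv.perm (Quotient.exact h)
  · intro h
    exact Quotient.sound (traceEquiv_of_perm hD h)

theorem count_cliqueFlat [DecidableEq α] {D : α → α → Prop} (x : α)
    (w : List (Clique D)) :
    (cliqueFlat w).count x = w.countP (fun A => decide (x ∈ A.1)) := by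
  induction w with
  | nil => simp [cliqueFlat]
  | cons A w ih =>
    have hflat : cliqueFlat (A :: w) = A.1.toList ++ cliqueFlat w := by
      simp [cliqueFlat]
    have hA : A.1.toList.count x = if x ∈ A.1 then 1 else 0 := by
      by_cases h : x ∈ A.1
      · rw [if_pos h]
        exact List.count_eq_one_of_mem A.1.nodup_toList (by simpa using h)
      · rw [if_neg h, List.count_eq_zero]
        simpa using h
    rw [hflat, List.count_append, hA, List.countP_cons, ih]
    by_cases h : x ∈ A.1 <;> simp [h, Nat.add_comm]

/-- `Rhd` for `Eq` is reverse inclusion. -/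
theorem rhd_eq_iff {A B : Clique (Eq : ABC → ABC → Prop)} :
    Rhd Eq A B ↔ B.1 ⊆ A.1 := by
  constructor
  · intro h b hb
    obtain ⟨a, ha, rfl⟩ := h b hb
    exact ha
  · intro h b hb
    exact ⟨b, h hb, rfl⟩

instance : IsTrans (Clique (Eq : ABC → ABC → Prop)) (Rhd Eq) :=
  ⟨fun _ _ _ h1 h2 => rhd_eq_iff.2 ((rhd_eq_iff.1 h2).trans (rhd_eq_iff.1 h1))⟩

/-- The clique `{x, y}`. -/
def pairClique (x y : ABC) : Clique (Eq : ABC → ABC → Prop) :=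
  ⟨{x, y}, ⟨x, by simp⟩, fun a _ b _ h => h⟩

theorem subset_pair_cases : ∀ (x y : ABC) (s : Finset ABC), s.Nonempty → s ⊆ {x, y} →
    s = {x} ∨ s = {y} ∨ s = {x, y} := by decide

/-- Languages of the form "all letters satisfy `p`" are regular. -/
theorem isRegular_all {β : Type} (p : β → Prop) [DecidablePred p] :
    Language.IsRegular {w : List β | ∀ x ∈ w, p x} := by
  refine ⟨Bool, inferInstance, ⟨fun s x => s && decide (p x), true, {s | s = true}⟩, ?_⟩
  have key : ∀ (w : List β) (s : Bool),
      w.foldl (fun s x => s && decide (p x)) s = (s && w.all fun x => decide (p x)) := by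
    intro w
    induction w with
    | nil => simp
    | cons x w ih =>
      intro s
      simp [List.foldl_cons, ih, Bool.and_assoc]
  ext w
  simp only [DFA.mem_accepts]
  show w.foldl _ true ∈ _ ↔ _
  rw [key]
  show _ ∈ {s | s = true} ↔ _ ∈ {w | ∀ x ∈ w, p x}
  simp [Set.mem_setOf_eq, List.all_eq_true]

theorem countP_lt_of_mem {β : Type*} {p q : β → Bool} {l : List β}
    (hmono : ∀ x ∈ l, p x → q x) {A : β} (hA : A ∈ l) (hq : q A) (hp : ¬ p A) :
    l.countP p < l.countP q := by
  obtain ⟨s, t, rfl⟩ := List.append_of_mem hA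
  have hs : s.countP p ≤ s.countP q :=
    List.countP_mono_left fun x hx => hmono x (by simp [hx])
  have ht : t.countP p ≤ t.countP q :=
    List.countP_mono_left fun x hx => hmono x (by simp [hx])
  rw [List.countP_append, List.countP_append, List.countP_cons, List.countP_cons,
    if_pos hq, if_neg hp]
  omega

/-- Characterization of the Foata normal forms of `[(xy)*]`. -/
theorem foata_char (x y : ABC) (hxy : x ≠ y)
    (w : List (Clique (Eq : ABC → ABC → Prop))) :
    (w ∈ Foata (Eq : ABC → ABC → Prop) ∧
      ∃ n : ℕ, Trace.mk Eq (cliqueFlat w)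
        = Trace.mk Eq ((List.replicate n [x, y]).flatten)) ↔
    ∀ A ∈ w, A = pairClique x y := by
  constructor
  · rintro ⟨hchain, n, heq⟩
    have hperm := (trace_mk_eq_iff (fun _ _ h => h)).1 heq
    have hcount : ∀ z : ABC,
        w.countP (fun A => decide (z ∈ A.1)) = n * [x, y].count z := by
      intro z
      rw [← count_cliqueFlat, hperm.count_eq, List.count_flatten, List.map_replicate,
        List.sum_replicate, smul_eq_mul]
    have hxc : [x, y].count x = 1 := by
      simp [List.count_cons, hxy.symm]
    have hyc : [x, y].count y = 1 := by
      simp [List.count_cons, hxy]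
    -- every clique in w is a subset of {x, y}
    have hsub : ∀ A ∈ w, A.1 ⊆ ({x, y} : Finset ABC) := by
      intro A hA z hz
      by_contra hzc
      simp only [Finset.mem_insert, Finset.mem_singleton, not_or] at hzc
      have hzcount : [x, y].count z = 0 := by
        simp [List.count_cons, hzc.1, hzc.2, Ne.symm hzc.1, Ne.symm hzc.2]
      have h0 : w.countP (fun A => decide (z ∈ A.1)) = 0 := by
        rw [hcount z, hzcount, Nat.mul_zero]
      rw [List.countP_eq_zero] at h0
      exact absurd (by simpa using hz) (by simpa using h0 A hA)
    have hpw : List.Pairwise (Rhd Eq) w := List.isChain_iff_pairwise.1 hchain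
    have hcomp : ∀ A ∈ w, ∀ B ∈ w, A.1 ⊆ B.1 ∨ B.1 ⊆ A.1 := by
      have hsym : Symmetric (fun A B : Clique (Eq : ABC → ABC → Prop) =>
          A.1 ⊆ B.1 ∨ B.1 ⊆ A.1) := fun _ _ h => h.symm
      have hpw' : List.Pairwise (fun A B : Clique (Eq : ABC → ABC → Prop) =>
          A.1 ⊆ B.1 ∨ B.1 ⊆ A.1) w := hpw.imp (fun h => Or.inr (rhd_eq_iff.1 h))
      intro A hA B hB
      by_cases hAB : A = B
      · exact Or.inl (hAB ▸ le_refl _)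
      · exact (haveI : Std.Symm (fun A B : Clique (Eq : ABC → ABC → Prop) =>
            A.1 ⊆ B.1 ∨ B.1 ⊆ A.1) := ⟨fun _ _ h => hsym h⟩; hpw'.forall hA hB hAB)
    -- no clique can be a strict singleton
    have key : ∀ (u v : ABC), u ≠ v → ({u, v} : Finset ABC) = {x, y} →
        ∀ A ∈ w, A.1 ≠ {u} := by
      intro u v huv hpair A hA hAu
      have hvA : v ∉ A.1 := by
        rw [hAu]; simp [huv.symm]
      have huA : u ∈ A.1 := by rw [hAu]; simp
      have hmono : ∀ B ∈ w, decide (v ∈ B.1) → decide (u ∈ B.1) := by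
        intro B hB hvB
        simp only [decide_eq_true_eq] at hvB ⊢
        rcases hcomp B hB A hA with h | h
        · exact absurd (hAu ▸ h hvB) (by simp [huv.symm])
        · exact h huA
      have hlt : w.countP (fun B => decide (v ∈ B.1))
          < w.countP (fun B => decide (u ∈ B.1)) :=
        countP_lt_of_mem hmono hA (by simpa using huA) (by simpa using hvA)
      have hu' : u ∈ ({x, y} : Finset ABC) := hpair ▸ (by simp)
      have hv' : v ∈ ({x, y} : Finset ABC) := hpair ▸ (by simp)
      have hucount : [x, y].count u = 1 := by
        rcases Finset.mem_insert.1 hu' with h | h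
        · rw [h]; exact hxc
        · rw [Finset.mem_singleton.1 h]; exact hyc
      have hvcount : [x, y].count v = 1 := by
        rcases Finset.mem_insert.1 hv' with h | h
        · rw [h]; exact hxc
        · rw [Finset.mem_singleton.1 h]; exact hyc
      rw [hcount u, hcount v, hucount, hvcount] at hlt
      omega
    intro A hA
    rcases subset_pair_cases x y A.1 A.2.1 (hsub A hA) with h | h | h
    · exact absurd h (key x y hxy rfl A hA)
    · refine absurd h (key y x hxy.symm ?_ A hA)
      ext z; simp; tauto
    · exact Subtype.ext h
  · intro hall
    have hw : w = List.replicate w.length (pairClique x y) :=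
      List.eq_replicate_of_mem hall
    constructor
    · rw [hw]
      refine (List.pairwise_replicate.2 (Or.inr ?_)).isChain
      exact rhd_eq_iff.2 (le_refl _)
    · refine ⟨w.length, (trace_mk_eq_iff (fun _ _ h => h)).2 (List.perm_iff_count.2 ?_)⟩
      intro z
      rw [count_cliqueFlat, List.count_flatten, List.map_replicate, List.sum_replicate,
        smul_eq_mul, hw, List.countP_replicate, List.length_replicate]
      by_cases hz : z ∈ (pairClique x y).1
      · have : [x, y].count z = 1 := by
          rcases Finset.mem_insert.1 hz with h | h
          · subst h; simp [List.count_cons, hxy.symm]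
          · rw [Finset.mem_singleton.1 h]; simp [List.count_cons, hxy]
        simp [hz, this]
      · have hz' : z ≠ x ∧ z ≠ y := by
          constructor <;> rintro rfl <;>
            exact hz (by simp [pairClique])
        have : [x, y].count z = 0 := by
          simp [List.count_cons, hz'.1, hz'.2, Ne.symm hz'.1, Ne.symm hz'.2]
        simp [hz, this]


/-- Count of cliques containing a given letter. -/
def cnt (z : ABC) (w : List (Clique (Eq : ABC → ABC → Prop))) : ℕ :=
  w.countP (fun A => decide (z ∈ A.1))

theorem cnt_append (z : ABC) (u v : List (Clique (Eq : ABC → ABC → Prop))) :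
    cnt z (u ++ v) = cnt z u + cnt z v :=
  List.countP_append

theorem count_flatten_rep (u v : ABC) (n : ℕ) (z : ABC) :
    ((List.replicate n [u, v]).flatten).count z = n * [u, v].count z := by
  rw [List.count_flatten, List.map_replicate, List.sum_replicate, smul_eq_mul]

/-- Membership of a trace in `[(ab)*]·[(bc)*]` is a counting condition. -/
theorem mem_prod_iff (w : List (Clique (Eq : ABC → ABC → Prop))) :
    Trace.mk Eq (cliqueFlat w) ∈
      ({t | ∃ n : ℕ, t = Trace.mk Eq ((List.replicate n [ABC.a, ABC.b]).flatten)} *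
       {t | ∃ n : ℕ, t = Trace.mk Eq ((List.replicate n [ABC.b, ABC.c]).flatten)}) ↔
    cnt ABC.a w + cnt ABC.c w = cnt ABC.b w := by
  constructor
  · intro h
    obtain ⟨t1, ht1, t2, ht2, heq⟩ := Set.mem_mul.1 h
    obtain ⟨n1, rfl⟩ := ht1
    obtain ⟨n2, rfl⟩ := ht2
    rw [Trace.mk_mul] at heq
    have hperm := (trace_mk_eq_iff (fun _ _ h => h)).1 heq.symm
    have hc : ∀ z : ABC, (cliqueFlat w).count z
        = n1 * [ABC.a, ABC.b].count z + n2 * [ABC.b, ABC.c].count z := by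
      intro z
      rw [hperm.count_eq, List.count_append, count_flatten_rep, count_flatten_rep]
    have ha := hc ABC.a
    have hb := hc ABC.b
    have hcc := hc ABC.c
    rw [count_cliqueFlat] at ha hb hcc
    simp only [List.count_cons, List.count_nil, beq_iff_eq, reduceCtorEq,
      if_true, if_false] at ha hb hcc
    norm_num at ha hb hcc
    show w.countP _ + w.countP _ = w.countP _
    omega
  · intro h
    refine Set.mem_mul.2 ⟨_, ⟨cnt ABC.a w, rfl⟩, _, ⟨cnt ABC.c w, rfl⟩, ?_⟩
    rw [Trace.mk_mul]
    refine ((trace_mk_eq_iff (fun _ _ h => h)).2 (List.perm_iff_count.2 ?_)).symm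
    intro z
    rw [List.count_append, count_flatten_rep, count_flatten_rep, count_cliqueFlat]
    have hab := h
    unfold cnt at hab
    cases z <;>
      simp only [List.count_cons, List.count_nil, beq_iff_eq, reduceCtorEq,
        if_true, if_false, beq_self_eq_true, cnt] <;>
      norm_num <;> omega

instance : DecidableEq (Clique (Eq : ABC → ABC → Prop)) := by
  unfold Clique; infer_instance

/-- The clique `{a, b, c}`. -/
def cTop : Clique (Eq : ABC → ABC → Prop) :=
  ⟨{ABC.a, ABC.b, ABC.c}, ⟨ABC.a, by simp⟩, fun a _ b _ h => h⟩

/-- The clique `{b}`. -/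
def cB : Clique (Eq : ABC → ABC → Prop) :=
  ⟨{ABC.b}, ⟨ABC.b, by simp⟩, fun a _ b _ h => h⟩

theorem cnt_replicate (z : ABC) (n : ℕ) (A : Clique (Eq : ABC → ABC → Prop)) :
    cnt z (List.replicate n A) = if z ∈ A.1 then n else 0 := by
  unfold cnt
  rw [List.countP_replicate]
  by_cases h : z ∈ A.1 <;> simp [h]

end Aux

/-- with all distinct letters independent
(`D = {(a,a),(b,b),(c,c)}`, i.e. `D = Eq`), the trace languages `[(ab)*]`
and `[(bc)*]` are level-regular, but their concatenation
`[(ab)*]·[(bc)*]` is not level-regular. -/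
theorem levelRegular_not_closed_concat :
    LevelRegular (Eq : ABC → ABC → Prop)
      {t | ∃ n : ℕ, t = Trace.mk Eq ((List.replicate n [ABC.a, ABC.b]).flatten)} ∧
    LevelRegular (Eq : ABC → ABC → Prop)
      {t | ∃ n : ℕ, t = Trace.mk Eq ((List.replicate n [ABC.b, ABC.c]).flatten)} ∧
    ¬ LevelRegular (Eq : ABC → ABC → Prop)
      ({t | ∃ n : ℕ, t = Trace.mk Eq ((List.replicate n [ABC.a, ABC.b]).flatten)} *
       {t | ∃ n : ℕ, t = Trace.mk Eq ((List.replicate n [ABC.b, ABC.c]).flatten)}) := by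
  refine ⟨?_, ?_, ?_⟩
  · show Language.IsRegular _
    have h : {w : List (Clique (Eq : ABC → ABC → Prop)) | w ∈ Foata Eq ∧
        Trace.mk Eq (cliqueFlat w) ∈ {t | ∃ n : ℕ,
          t = Trace.mk Eq ((List.replicate n [ABC.a, ABC.b]).flatten)}}
        = {w | ∀ A ∈ w, A = pairClique ABC.a ABC.b} := by
      ext w
      exact foata_char ABC.a ABC.b (by decide) w
    rw [h]
    exact isRegular_all _
  · show Language.IsRegular _
    have h : {w : List (Clique (Eq : ABC → ABC → Prop)) | w ∈ Foata Eq ∧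
        Trace.mk Eq (cliqueFlat w) ∈ {t | ∃ n : ℕ,
          t = Trace.mk Eq ((List.replicate n [ABC.b, ABC.c]).flatten)}}
        = {w | ∀ A ∈ w, A = pairClique ABC.b ABC.c} := by
      ext w
      exact foata_char ABC.b ABC.c (by decide) w
    rw [h]
    exact isRegular_all _
  · rintro ⟨σ, fin, M, hM⟩
    set n := Fintype.card σ with hn
    set X : List (Clique (Eq : ABC → ABC → Prop)) :=
      List.replicate n cTop ++ List.replicate n cB with hX
    have hBsubTop : Rhd (Eq : ABC → ABC → Prop) cTop cB :=
      rhd_eq_iff.2 (by intro z hz; fin_cases hz <;> simp [cTop])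
    have hchainX : X ∈ Foata (Eq : ABC → ABC → Prop) := by
      refine List.Pairwise.isChain (List.pairwise_append.2 ⟨?_, ?_, ?_⟩)
      · exact List.pairwise_replicate.2 (Or.inr (rhd_eq_iff.2 subset_rfl))
      · exact List.pairwise_replicate.2 (Or.inr (rhd_eq_iff.2 subset_rfl))
      · intro A hA B hB
        rw [List.eq_of_mem_replicate hA, List.eq_of_mem_replicate hB]
        exact hBsubTop
    have hcntX : ∀ z : ABC, cnt z X =
        (if z ∈ cTop.1 then n else 0) + (if z ∈ cB.1 then n else 0) := by
      intro z
      rw [hX, cnt_append, cnt_replicate, cnt_replicate]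
    have hXmem : X ∈ M.accepts := by
      rw [hM]
      refine ⟨hchainX, (mem_prod_iff X).2 ?_⟩
      rw [hcntX, hcntX, hcntX]
      simp [cTop, cB]
    have hlenX : Fintype.card σ ≤ X.length := by
      rw [hX]
      simp [n]
    obtain ⟨u, v, t, hx, hlen, hne, hsub⟩ := M.pumping_lemma hXmem hlenX
    -- u ++ v is a prefix of replicate n cTop
    have htake : u ++ v = List.replicate (min (u.length + v.length) n) cTop := by
      have h1 : (u ++ v ++ t).take (u.length + v.length) = u ++ v :=
        List.take_left' (by simp)
      rw [← h1, ← hx, hX, List.take_append_of_le_length (by simpa using hlen),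
        List.take_replicate]
    have hv : v = List.replicate v.length cTop := by
      refine List.eq_replicate_of_mem fun A hA => ?_
      exact List.eq_of_mem_replicate (htake ▸ List.mem_append_right u hA)
    -- the pumped word
    have hYmem : u ++ (v ++ v) ++ t ∈ M.accepts := by
      refine hsub ?_
      refine Language.mem_mul.2 ⟨u ++ (v ++ v), ?_, t, rfl, by simp⟩
      refine Language.mem_mul.2 ⟨u, rfl, v ++ v, ?_, rfl⟩
      refine Language.mem_kstar.2 ⟨[v, v], by simp, fun y hy => ?_⟩
      rw [List.mem_cons, List.mem_singleton] at hy
      rcases hy with rfl | rfl <;> rfl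
    rw [hM] at hYmem
    have hYcnt := (mem_prod_iff _).1 hYmem.2
    -- counting
    have hcntv : ∀ z : ABC, cnt z v = v.length := by
      intro z
      rw [hv, cnt_replicate, List.length_replicate]
      rw [if_pos (by cases z <;> simp [cTop])]
    have hcntY : ∀ z : ABC, cnt z (u ++ (v ++ v) ++ t) = cnt z X + cnt z v := by
      intro z
      rw [hx]
      simp only [cnt_append]
      omega
    have hXeq : cnt ABC.a X + cnt ABC.c X = cnt ABC.b X := by
      rw [hcntX, hcntX, hcntX]
      simp [cTop, cB]
    rw [hcntY, hcntY, hcntY, hcntv, hcntv, hcntv] at hYcnt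
    have hvpos : 0 < v.length := List.length_pos_iff.2 hne
    omega
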